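/- Let X = X₀ = [[0,1,0],[1,0,0],[0,0,t]] and Y = Y₀·U, where Y₀ = [[1,0,0],[0,0,1],[0,t,0]] and U = [[0,0,t⁻¹],[1,0,0],[0,t,0]] over ℤ[t,t⁻¹]. Then for every integer i ≥ 1, Y^i · X ≠ X · Y^i. -/

import Mathlib

open Matrix LaurentPolynomial

lemma T_ne_zero' (n : ℤ) : (T n : LaurentPolynomial ℤ) ≠ 0 := by
  intro h
  have := congrArg (fun p : LaurentPolynomial ℤ => p.coeff n) h
  simp at this

lemma T_eq_one_iff (n : ℤ) : (T n : LaurentPolynomial ℤ) = 1 ↔ n = 0 := by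
  constructor
  · intro h
    by_contra hn
    have := congrArg (fun p : LaurentPolynomial ℤ => p.coeff 0) h
    simp only [T_apply, hn, if_neg, AddMonoidAlgebra.one_def, Finsupp.single_apply] at this
    simp at this
  · rintro rfl; simp

/-- Case (c): X = X₀, Y = Y₀·U.  Then Y^i · X ≠ X · Y^i for every i ≥ 1. -/
theorem stmt7 :
    let X₀ : Matrix (Fin 3) (Fin 3) (LaurentPolynomial ℤ) := !![0, 1, 0; 1, 0, 0; 0, 0, T 1]
    let Y₀ : Matrix (Fin 3) (Fin 3) (LaurentPolynomial ℤ) := !![1, 0, 0; 0, 0, 1; 0, T 1, 0]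
    let U : Matrix (Fin 3) (Fin 3) (LaurentPolynomial ℤ) := !![0, 0, T (-1); 1, 0, 0; 0, T 1, 0]
    let X := X₀
    let Y := Y₀ * U
    ∀ i : ℕ, 1 ≤ i → Y ^ i * X ≠ X * Y ^ i := by
  intro X₀ Y₀ U X Y i hi
  have hY : Y = !![0, 0, T (-1); 0, T 1, 0; T 1, 0, 0] := by
    show Y₀ * U = _
    ext a b
    fin_cases a <;> fin_cases b <;>
      simp [Y₀, U, Matrix.mul_apply, Fin.sum_univ_three, Matrix.vecHead, Matrix.vecTail]
  -- key invariant about entries of Y^i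
  have key : ∀ n : ℕ, (Y ^ n) 1 1 = T n ∧
      (((Y ^ n) 0 0 = 1 ∧ (Y ^ n) 0 2 = 0) ∨
       ((Y ^ n) 0 0 = 0 ∧ (Y ^ n) 0 2 = T (-1))) := by
    intro n
    induction n with
    | zero => simp
    | succ n ih =>
      obtain ⟨h11, hbr⟩ := ih
      have e11 : (Y ^ (n+1)) 1 1 = (Y ^ n) 1 1 * T 1 := by
        rw [pow_succ, Matrix.mul_apply, Fin.sum_univ_three]
        conv_lhs => rw [hY]
        simp [Matrix.vecHead, Matrix.vecTail]
        rw [hY]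
        exact Or.inl rfl
      have e00 : (Y ^ (n+1)) 0 0 = (Y ^ n) 0 2 * T 1 := by
        rw [pow_succ, Matrix.mul_apply, Fin.sum_univ_three]
        conv_lhs => rw [hY]
        simp [Matrix.vecHead, Matrix.vecTail]
        rw [hY]
        exact Or.inl rfl
      have e02 : (Y ^ (n+1)) 0 2 = (Y ^ n) 0 0 * T (-1) := by
        rw [pow_succ, Matrix.mul_apply, Fin.sum_univ_three]
        conv_lhs => rw [hY]
        simp [Matrix.vecHead, Matrix.vecTail]
        rw [hY]
        exact Or.inl rfl
      refine ⟨?_, ?_⟩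
      · rw [e11, h11, ← T_add]; push_cast; ring_nf
      · rcases hbr with ⟨h0, h2⟩ | ⟨h0, h2⟩
        · right; rw [e00, e02, h0, h2]; simp
        · left; rw [e00, e02, h0, h2, ← T_add]
          norm_num
  intro hcomm
  have h01 := congrFun (congrFun hcomm 0) 1
  rw [Matrix.mul_apply, Matrix.mul_apply, Fin.sum_univ_three, Fin.sum_univ_three] at h01
  simp only [X, X₀] at h01
  simp [Matrix.vecHead, Matrix.vecTail] at h01
  obtain ⟨h11, hbr⟩ := key i
  rw [h11] at h01
  rcases hbr with ⟨h0, _⟩ | ⟨h0, _⟩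
  · rw [h0] at h01
    have : (i : ℤ) = 0 := (T_eq_one_iff _).mp h01.symm
    omega
  · rw [h0] at h01
    exact T_ne_zero' _ h01.symm
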